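/- Let d: ℝᵖ → ℝ be concave differentiable with L-Lipschitz gradient, and suppose for a point μ there exist a value d̄(μ) and vector g(μ) such that d(λ) ≤ d̄(μ) + ⟨g(μ), λ - μ⟩ for all λ (an inexact supergradient inequality), 0 ≤ d̄(μ) - d(μ) ≤ ε, and ‖g(μ) - ∇d(μ)‖ ≤ √(2Lε). Then for all λ: d(λ) ≥ d̄(μ) + ⟨g(μ), λ - μ⟩ - L‖λ - μ‖² - 2ε. -/

import Mathlib

open RealInnerProductSpace

lemma descent_aux {p : ℕ} (d : EuclideanSpace ℝ (Fin p) → ℝ)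
    (gd : EuclideanSpace ℝ (Fin p) → EuclideanSpace ℝ (Fin p)) (L : ℝ) (hL : 0 ≤ L)
    (hgrad : ∀ x, HasGradientAt d (gd x) x)
    (hlip : ∀ x y, ‖gd x - gd y‖ ≤ L * ‖x - y‖)
    (x y : EuclideanSpace ℝ (Fin p)) :
    d x + ⟪gd x, y - x⟫ - L / 2 * ‖y - x‖ ^ 2 ≤ d y := by
  set v := y - x with hv
  set ψ : ℝ → ℝ := fun t => d (x + t • v) - t * ⟪gd x, v⟫ + L / 2 * t ^ 2 * ‖v‖ ^ 2 with hψdef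
  have hψ : ∀ t : ℝ, HasDerivAt ψ (⟪gd (x + t • v), v⟫ - ⟪gd x, v⟫ + L * t * ‖v‖ ^ 2) t := by
    intro t
    have hc : HasDerivAt (fun t : ℝ => x + t • v) v t := by
      simpa using ((hasDerivAt_id t).smul_const v).const_add x
    have hd : HasDerivAt (fun t : ℝ => d (x + t • v)) ⟪gd (x + t • v), v⟫ t := by
      have := ((hgrad (x + t • v)).hasFDerivAt.comp_hasDerivAt t hc)
      simpa [InnerProductSpace.toDual_apply_apply, Function.comp_def] using this
    have h2 : HasDerivAt (fun t : ℝ => t * ⟪gd x, v⟫) ⟪gd x, v⟫ t := by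
      simpa using (hasDerivAt_id t).mul_const ⟪gd x, v⟫
    have h3 : HasDerivAt (fun t : ℝ => L / 2 * t ^ 2 * ‖v‖ ^ 2)
        (L * t * ‖v‖ ^ 2) t := by
      have := ((hasDerivAt_pow 2 t).const_mul (L / 2)).mul_const (‖v‖ ^ 2)
      refine this.congr_deriv ?_
      ring
    exact (hd.sub h2).add h3
  have hdiff : Differentiable ℝ ψ := fun t => (hψ t).differentiableAt
  have mono : MonotoneOn ψ (Set.Icc (0 : ℝ) 1) := by
    apply monotoneOn_of_deriv_nonneg (convex_Icc 0 1) hdiff.continuous.continuousOn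
      hdiff.differentiableOn
    intro t ht
    rw [interior_Icc] at ht
    rw [(hψ t).deriv]
    have h1 : ⟪gd x - gd (x + t • v), v⟫ ≤ ‖gd x - gd (x + t • v)‖ * ‖v‖ :=
      real_inner_le_norm _ _
    have h2 : ‖gd x - gd (x + t • v)‖ ≤ L * (t * ‖v‖) := by
      have := hlip x (x + t • v)
      have hn : ‖x - (x + t • v)‖ = t * ‖v‖ := by
        simp [norm_smul, abs_of_pos ht.1]
      rwa [hn] at this
    have h3 : ⟪gd x, v⟫ - ⟪gd (x + t • v), v⟫ = ⟪gd x - gd (x + t • v), v⟫ := by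
      rw [inner_sub_left]
    have hvn : (0 : ℝ) ≤ ‖v‖ := norm_nonneg _
    nlinarith [mul_le_mul_of_nonneg_right h2 hvn]
  have key := mono (Set.left_mem_Icc.2 zero_le_one) (Set.right_mem_Icc.2 zero_le_one)
    zero_le_one
  have h0 : ψ 0 = d x := by simp [hψdef]
  have h1 : ψ 1 = d y - ⟪gd x, v⟫ + L / 2 * ‖v‖ ^ 2 := by
    simp [hψdef, hv]
  rw [h0, h1] at key
  linarith

/-- Inexact descent lemma (Lemma 2). -/
theorem stmt_2 {p : ℕ} (d : EuclideanSpace ℝ (Fin p) → ℝ)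
    (gd : EuclideanSpace ℝ (Fin p) → EuclideanSpace ℝ (Fin p)) (L eps : ℝ)
    (hL : 0 < L) (heps : 0 < eps)
    (hconc : ConcaveOn ℝ Set.univ d)
    (hgrad : ∀ x, HasGradientAt d (gd x) x)
    (hlip : ∀ x y, ‖gd x - gd y‖ ≤ L * ‖x - y‖)
    (mu : EuclideanSpace ℝ (Fin p)) (db : ℝ) (gv : EuclideanSpace ℝ (Fin p))
    (hsupper : ∀ lam, d lam ≤ db + ⟪gv, lam - mu⟫)
    (hval : 0 ≤ db - d mu ∧ db - d mu ≤ eps)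
    (hgv : ‖gv - gd mu‖ ≤ Real.sqrt (2 * L * eps)) :
    ∀ lam, d lam ≥ db + ⟪gv, lam - mu⟫ - L * ‖lam - mu‖ ^ 2 - 2 * eps := by
  intro lam
  have hdesc := descent_aux d gd L hL.le hgrad hlip mu lam
  set v := lam - mu with hv
  have herr : ⟪gv - gd mu, v⟫ ≤ eps + L / 2 * ‖v‖ ^ 2 := by
    have h1 : ⟪gv - gd mu, v⟫ ≤ ‖gv - gd mu‖ * ‖v‖ := real_inner_le_norm _ _
    have h2 : ‖gv - gd mu‖ * ‖v‖ ≤ Real.sqrt (2 * L * eps) * ‖v‖ :=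
      mul_le_mul_of_nonneg_right hgv (norm_nonneg _)
    have hs : Real.sqrt (2 * L * eps) ^ 2 = 2 * L * eps :=
      Real.sq_sqrt (by positivity)
    nlinarith [sq_nonneg (Real.sqrt (2 * L * eps) - L * ‖v‖), norm_nonneg v,
      Real.sqrt_nonneg (2 * L * eps)]
  have hsplit : ⟪gd mu, v⟫ = ⟪gv, v⟫ - ⟪gv - gd mu, v⟫ := by
    rw [inner_sub_left]; ring
  have hdb : d mu ≥ db - eps := by linarith [hval.2]
  rw [hsplit] at hdesc
  linarith
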